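/- Let v : Fin 5 → ℙ(K^4) satisfy π(v)({0,1,2}) = 2 and π(v)(I) = min(|I|, 3) for every I ⊆ Fin 5 with I ≠ {0,1,2}. Then there exist scalars p_0, p_1 ∈ K with p_0 p_1 (p_0 − p_1) ≠ 0 and a linear automorphism g of K^4 such that v_0 = g[e_0], v_1 = g[e_1], v_2 = g[p_0 e_0 + p_1 e_1], v_3 = g[e_2], and v_4 = g[e_0 + e_1 + e_2]. -/

import Mathlib

open scoped LinearAlgebra.Projectivization

/-- The subspace of `Fin n → K` spanned by the lines `v i` for `i ∈ I`. -/
noncomputable def spanV {K : Type*} [Field K] {n m : ℕ}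
    (v : Fin m → ℙ K (Fin n → K)) (I : Finset (Fin m)) : Submodule K (Fin n → K) :=
  ⨆ i ∈ I, (v i).submodule

/-- The rank matrix of a tuple of points in projective space. -/
noncomputable def rankMatrix {K : Type*} [Field K] {n m : ℕ}
    (v : Fin m → ℙ K (Fin n → K)) (I : Finset (Fin m)) : ℕ :=
  Module.finrank K (spanV v I)

lemma ne_zero_of_apply_ne_zero {K : Type*} [Field K] {n : ℕ} {u : Fin n → K} {i : Fin n}
    (h : u i ≠ 0) : u ≠ 0 := fun h0 => h (by rw [h0]; rfl)

lemma spanV_eq' {K : Type*} [Field K] {n m : ℕ}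
    (v : Fin m → ℙ K (Fin n → K)) (I : Finset (Fin m)) :
    spanV v I = Submodule.span K ((fun i => (v i).rep) '' I) := by
  simp only [spanV, Projectivization.submodule_eq, Set.image_eq_iUnion]
  rw [Submodule.span_iUnion₂]
  simp

lemma indep_combo {K : Type*} [Field K] {n : ℕ} {x y z : Fin n → K}
    (h : LinearIndependent K ![x, y, z]) {c₀ c₁ c₂ : K}
    (hc : c₀ • x + c₁ • y + c₂ • z = 0) : c₀ = 0 ∧ c₁ = 0 ∧ c₂ = 0 := by
  have := Fintype.linearIndependent_iff.mp h ![c₀, c₁, c₂] (by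
    simpa [Fin.sum_univ_three] using hc)
  exact ⟨this 0, this 1, this 2⟩

/-- normal form for quintuples of rank type (5,8). -/
theorem rank_5_8_normal_form (K : Type*) [Field K] [IsAlgClosed K] [CharZero K]
    (v : Fin 5 → ℙ K (Fin 4 → K))
    (h012 : rankMatrix v {0, 1, 2} = 2)
    (h : ∀ I : Finset (Fin 5), I ≠ {0, 1, 2} → rankMatrix v I = min I.card 3) :
    ∃ p₀ p₁ : K, ∃ hp : p₀ * p₁ * (p₀ - p₁) ≠ 0,
      ∃ g : (Fin 4 → K) ≃ₗ[K] (Fin 4 → K),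
        v 0 = Projectivization.mk K (g ![1,0,0,0])
            (g.map_ne_zero_iff.mpr (ne_zero_of_apply_ne_zero (i := 0) (by norm_num))) ∧
        v 1 = Projectivization.mk K (g ![0,1,0,0])
            (g.map_ne_zero_iff.mpr (ne_zero_of_apply_ne_zero (i := 1) (by norm_num))) ∧
        v 2 = Projectivization.mk K (g ![p₀,p₁,0,0])
            (g.map_ne_zero_iff.mpr (ne_zero_of_apply_ne_zero (i := 0) (by
              simpa using left_ne_zero_of_mul (left_ne_zero_of_mul hp)))) ∧
        v 3 = Projectivization.mk K (g ![0,0,1,0])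
            (g.map_ne_zero_iff.mpr (ne_zero_of_apply_ne_zero (i := 2) (by
              show (1 : K) ≠ 0; exact one_ne_zero))) ∧
        v 4 = Projectivization.mk K (g ![1,1,1,0])
            (g.map_ne_zero_iff.mpr (ne_zero_of_apply_ne_zero (i := 0) (by norm_num))) := by
  classical
  set r : Fin 5 → (Fin 4 → K) := fun i => (v i).rep with hrdef
  -- independence of admissible triples
  have hind : ∀ i j k : Fin 5, ({i, j, k} : Finset (Fin 5)) ≠ {0, 1, 2} →
      ({i, j, k} : Finset (Fin 5)).card = 3 → LinearIndependent K ![r i, r j, r k] := by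
    intro i j k hne hcard
    rw [linearIndependent_iff_card_eq_finrank_span, Set.finrank]
    have h1 : Set.range ![r i, r j, r k] =
        ((fun i => (v i).rep) '' (({i, j, k} : Finset (Fin 5)) : Set (Fin 5))) := by
      ext w; simp [hrdef, Set.image_insert_eq]; tauto
    rw [h1, ← spanV_eq']
    have h2 := h _ hne
    rw [hcard] at h2
    simp only [rankMatrix] at h2
    simp [h2]
  have h013 := hind 0 1 3 (by decide) (by decide)
  have h123 := hind 1 2 3 (by decide) (by decide)
  have h023 := hind 0 2 3 (by decide) (by decide)
  have h134 := hind 1 3 4 (by decide) (by decide)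
  have h034 := hind 0 3 4 (by decide) (by decide)
  have h014 := hind 0 1 4 (by decide) (by decide)
  have h234 := hind 2 3 4 (by decide) (by decide)
  -- membership
  have hmem : ∀ (i : Fin 5) (I : Finset (Fin 5)), i ∈ I → r i ∈ spanV v I := by
    intro i I hi
    have hle : (v i).submodule ≤ spanV v I :=
      le_iSup₂ (f := fun i (_ : i ∈ I) => (v i).submodule) i hi
    exact hle (by rw [Projectivization.submodule_eq]; exact Submodule.mem_span_singleton_self _)
  have hsub : ∀ I J : Finset (Fin 5), I ⊆ J → spanV v I ≤ spanV v J := by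
    intro I J hIJ
    exact iSup_le fun i => iSup_le fun hi =>
      le_iSup₂ (f := fun i (_ : i ∈ J) => (v i).submodule) i (hIJ hi)
  -- r 2 ∈ span {r 0, r 1}
  have e1 : spanV v {0, 1} = spanV v {0, 1, 2} := by
    apply Submodule.eq_of_le_of_finrank_le (hsub _ _ (by decide))
    have hA : Module.finrank K (spanV v ({0,1} : Finset (Fin 5))) = 2 := by
      have := h {0, 1} (by decide); simpa [rankMatrix] using this
    simp only [rankMatrix] at h012
    rw [h012, hA]
  have himg2 : spanV v ({0, 1} : Finset (Fin 5)) = Submodule.span K {r 0, r 1} := by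
    rw [spanV_eq']; congr 1; simp [hrdef, Set.image_insert_eq]
  have hr2 : r 2 ∈ Submodule.span K {r 0, r 1} := by
    rw [← himg2, e1]; exact hmem 2 {0, 1, 2} (by decide)
  obtain ⟨c₀, c₁, hc⟩ := Submodule.mem_span_pair.1 hr2
  -- r 4 ∈ span {r 0, r 1, r 3}
  have e2 : spanV v {0, 1, 3} = spanV v {0, 1, 3, 4} := by
    apply Submodule.eq_of_le_of_finrank_le (hsub _ _ (by decide))
    have hA : Module.finrank K (spanV v ({0,1,3} : Finset (Fin 5))) = 3 := by
      have := h {0, 1, 3} (by decide); simpa [rankMatrix] using this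
    have hB : Module.finrank K (spanV v ({0,1,3,4} : Finset (Fin 5))) = 3 := by
      have := h {0, 1, 3, 4} (by decide); simpa [rankMatrix] using this
    rw [hA, hB]
  have himg3 : spanV v ({0, 1, 3} : Finset (Fin 5)) = Submodule.span K {r 0, r 1, r 3} := by
    rw [spanV_eq']; congr 1; simp [hrdef, Set.image_insert_eq]
  have hr4 : r 4 ∈ Submodule.span K ({r 0, r 1, r 3} : Set (Fin 4 → K)) := by
    rw [← himg3, e2]; exact hmem 4 {0, 1, 3, 4} (by decide)
  obtain ⟨a, w', hw', hw4⟩ := Submodule.mem_span_insert.1 hr4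
  obtain ⟨b, c, hbc⟩ := Submodule.mem_span_pair.1 hw'
  rw [← hbc] at hw4
  -- hw4 : r 4 = a • r 0 + (b • r 1 + c • r 3)
  -- nonvanishing
  have ha : a ≠ 0 := by
    intro h0
    rw [h0, zero_smul, zero_add] at hw4
    have : b • r 1 + c • r 3 + (-1 : K) • r 4 = 0 := by rw [neg_smul, one_smul, ← hw4]; abel
    have := (indep_combo h134 this).2.2
    norm_num at this
  have hb : b ≠ 0 := by
    intro h0
    rw [h0, zero_smul, zero_add] at hw4
    have : a • r 0 + c • r 3 + (-1 : K) • r 4 = 0 := by rw [neg_smul, one_smul, ← hw4]; abel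
    have := (indep_combo h034 this).2.2
    norm_num at this
  have hcz : c ≠ 0 := by
    intro h0
    rw [h0, zero_smul, add_zero] at hw4
    have : a • r 0 + b • r 1 + (-1 : K) • r 4 = 0 := by rw [neg_smul, one_smul, ← hw4]; abel
    have := (indep_combo h014 this).2.2
    norm_num at this
  have hc0 : c₀ ≠ 0 := by
    intro h0
    rw [h0, zero_smul, zero_add] at hc
    have : c₁ • r 1 + (-1 : K) • r 2 + (0 : K) • r 3 = 0 := by
      rw [neg_smul, one_smul, hc]; simp
    have := (indep_combo h123 this).2.1
    norm_num at this
  have hc1 : c₁ ≠ 0 := by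
    intro h0
    rw [h0, zero_smul, add_zero] at hc
    have : c₀ • r 0 + (-1 : K) • r 2 + (0 : K) • r 3 = 0 := by
      rw [neg_smul, one_smul, hc]; simp
    have := (indep_combo h023 this).2.1
    norm_num at this
  set p₀ : K := c₀ * a⁻¹ with hp₀def
  set p₁ : K := c₁ * b⁻¹ with hp₁def
  have hp0 : p₀ ≠ 0 := mul_ne_zero hc0 (inv_ne_zero ha)
  have hp1 : p₁ ≠ 0 := mul_ne_zero hc1 (inv_ne_zero hb)
  have hpne : p₀ ≠ p₁ := by
    intro hpe
    have hc₀ : c₀ = p₀ * a := by rw [hp₀def, inv_mul_cancel_right₀ ha]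
    have hc₁ : c₁ = p₀ * b := by rw [hpe, hp₁def, inv_mul_cancel_right₀ hb]
    have heq : (1 : K) • r 2 + (p₀ * c) • r 3 + (-p₀) • r 4 = 0 := by
      rw [one_smul, hw4, ← hc, hc₀, hc₁]
      simp only [smul_add, smul_smul, neg_mul]
      module
    have := (indep_combo h234 heq).1
    norm_num at this
  -- the basis
  have hw013 : LinearIndependent K ![a • r 0, b • r 1, c • r 3] := by
    have := h013.units_smul ![Units.mk0 a ha, Units.mk0 b hb, Units.mk0 c hcz]
    convert this using 1
    funext i; fin_cases i <;> simp [Units.smul_def]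
  have hspanlt : Submodule.span K (Set.range ![a • r 0, b • r 1, c • r 3]) ≠ ⊤ := by
    intro htop
    have h1 : Module.finrank K (Submodule.span K (Set.range ![a • r 0, b • r 1, c • r 3])) ≤ 3 := by
      have := finrank_range_le_card (R := K) ![a • r 0, b • r 1, c • r 3]
      simpa [Set.finrank] using this
    rw [htop, finrank_top] at h1
    simp [Module.finrank_pi] at h1
  obtain ⟨w3, hw3⟩ : ∃ w3, w3 ∉ Submodule.span K (Set.range ![a • r 0, b • r 1, c • r 3]) := by
    by_contra hcon
    push_neg at hcon
    exact hspanlt (Submodule.eq_top_iff'.2 hcon)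
  set W : Fin 4 → (Fin 4 → K) := Fin.snoc ![a • r 0, b • r 1, c • r 3] w3 with hWdef
  have hWli : LinearIndependent K W := by
    rw [hWdef, linearIndependent_fin_snoc]
    exact ⟨hw013, hw3⟩
  have hWcard : Fintype.card (Fin 4) = Module.finrank K (Fin 4 → K) := by simp
  set bas : Module.Basis (Fin 4) K (Fin 4 → K) := basisOfLinearIndependentOfCardEqFinrank hWli hWcard
    with hbasdef
  have hbas : ∀ i, bas i = W i := fun i => by
    rw [hbasdef, coe_basisOfLinearIndependentOfCardEqFinrank]
  set g : (Fin 4 → K) ≃ₗ[K] (Fin 4 → K) := (Pi.basisFun K (Fin 4)).equiv bas (Equiv.refl _)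
    with hgdef
  have hg : ∀ i, g (Pi.basisFun K (Fin 4) i) = W i := by
    intro i
    rw [hgdef, Module.Basis.equiv_apply, hbas]
    rfl
  have hW0 : W 0 = a • r 0 := by simp [hWdef, Fin.snoc]
  have hW1 : W 1 = b • r 1 := by simp [hWdef, Fin.snoc]
  have hW2 : W 2 = c • r 3 := by simp [hWdef, Fin.snoc]
  -- standard vectors
  have hE0 : (![1,0,0,0] : Fin 4 → K) = Pi.basisFun K (Fin 4) 0 := by
    funext j; fin_cases j <;> simp
  have hE1 : (![0,1,0,0] : Fin 4 → K) = Pi.basisFun K (Fin 4) 1 := by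
    funext j; fin_cases j <;> simp
  have hE2 : (![0,0,1,0] : Fin 4 → K) = Pi.basisFun K (Fin 4) 2 := by
    funext j; fin_cases j <;> simp
  have hEP : (![p₀,p₁,0,0] : Fin 4 → K)
      = p₀ • Pi.basisFun K (Fin 4) 0 + p₁ • Pi.basisFun K (Fin 4) 1 := by
    funext j; fin_cases j <;> simp
  have hE4 : (![1,1,1,0] : Fin 4 → K)
      = Pi.basisFun K (Fin 4) 0 + Pi.basisFun K (Fin 4) 1 + Pi.basisFun K (Fin 4) 2 := by
    funext j; fin_cases j <;> simp
  -- the key mk lemma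
  have veq : ∀ (i : Fin 5) (u : Fin 4 → K) (hu : u ≠ 0) (t : K), u = t • (v i).rep →
      v i = Projectivization.mk K u hu := by
    intro i u hu t htu
    have ht : t ≠ 0 := by rintro rfl; rw [zero_smul] at htu; exact hu htu
    rw [← Projectivization.mk_rep (v i)]
    rw [Projectivization.mk_eq_mk_iff]
    exact ⟨(Units.mk0 t ht)⁻¹, by
      simp [htu, Units.smul_def, smul_smul, inv_mul_cancel₀ ht]⟩
  refine ⟨p₀, p₁, ?_, g, ?_, ?_, ?_, ?_, ?_⟩
  · exact mul_ne_zero (mul_ne_zero hp0 hp1) (sub_ne_zero_of_ne hpne)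
  · refine veq 0 _ _ a ?_
    rw [hE0, hg, hW0]
  · refine veq 1 _ _ b ?_
    rw [hE1, hg, hW1]
  · refine veq 2 _ _ 1 ?_
    rw [hEP, map_add, map_smul, map_smul, hg, hg, hW0, hW1, one_smul]
    show p₀ • a • r 0 + p₁ • b • r 1 = r 2
    rw [← hc, smul_smul, smul_smul, hp₀def, hp₁def]
    rw [inv_mul_cancel_right₀ ha, inv_mul_cancel_right₀ hb]
  · refine veq 3 _ _ c ?_
    rw [hE2, hg, hW2]
  · refine veq 4 _ _ 1 ?_
    rw [hE4, map_add, map_add, hg, hg, hg, hW0, hW1, hW2, one_smul]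
    show a • r 0 + b • r 1 + c • r 3 = r 4
    rw [hw4]; abel
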